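/- For a nonzero generalized Euclidean distance matrix D, the all-ones vector 1 lies in both the column space of D and the column space of D'. -/

import Mathlib

open Matrix Finset

private lemma gedm_trace_pos {n : ℕ} {L : Matrix (Fin n) (Fin n) ℝ} (hL : L.PosSemidef)
    (hL0 : L ≠ 0) : 0 < ∑ i, L i i := by
  have hdiag : ∀ i, 0 ≤ L i i := by
    intro i
    have := hL.dotProduct_mulVec_nonneg (Pi.single i 1)
    simpa [dotProduct, mulVec_single, Pi.single_apply, Finset.sum_ite_eq,
      Finset.sum_ite_eq'] using this
  rcases lt_or_eq_of_le (Finset.sum_nonneg fun i _ => hdiag i) with h | h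
  · exact h
  exfalso
  apply hL0
  have hz : ∀ i, L i i = 0 := fun i =>
    (Finset.sum_eq_zero_iff_of_nonneg (fun i _ => hdiag i)).mp h.symm i (mem_univ i)
  ext j i
  have hcol : L *ᵥ Pi.single i 1 = 0 := by
    rw [← hL.dotProduct_mulVec_zero_iff]
    simp [dotProduct, mulVec_single, Pi.single_apply, Finset.sum_ite_eq, Finset.sum_ite_eq', hz]
  have := congrFun hcol j
  simpa [mulVec_single] using this

private lemma gedm_key {n : ℕ} {L : Matrix (Fin n) (Fin n) ℝ} (hL : L.PosSemidef)
    (hL1 : L *ᵥ (fun _ => (1 : ℝ)) = 0) (htr : 0 < ∑ i, L i i)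
    {a b : ℝ} (ha : 0 < a) (hb : 0 < b) (v : Fin n → ℝ)
    (hv : ∀ j, ∑ i, (a ^ 2 * L i i + b ^ 2 * L j j - 2 * a * b * L i j) * v i = 0) :
    ∑ i, v i = 0 := by
  have hsym : ∀ i j, L i j = L j i := fun i j => by
    conv_lhs => rw [← hL.1]
    simp [conjTranspose_apply]
  obtain ⟨s, hs⟩ : ∃ s, (∑ i, v i) = s := ⟨_, rfl⟩
  obtain ⟨t, ht⟩ : ∃ t, (∑ i, L i i * v i) = t := ⟨_, rfl⟩
  obtain ⟨τ, hτ⟩ : ∃ τ, (∑ i, L i i) = τ := ⟨_, rfl⟩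
  rw [hτ] at htr
  rw [hs]
  set w := L *ᵥ v with hw
  have hwj : ∀ j, w j = ∑ i, L j i * v i := fun j => by
    simp [hw, mulVec, dotProduct]
  have hv' : ∀ j, a ^ 2 * t + b ^ 2 * L j j * s - 2 * a * b * w j = 0 := by
    intro j
    calc a ^ 2 * t + b ^ 2 * L j j * s - 2 * a * b * w j
        = a ^ 2 * (∑ i, L i i * v i) + b ^ 2 * L j j * (∑ i, v i)
            - 2 * a * b * (∑ i, L j i * v i) := by rw [ht, hs, hwj]
      _ = ∑ i, (a ^ 2 * (L i i * v i) + b ^ 2 * L j j * v i - 2 * a * b * (L j i * v i)) := by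
          rw [Finset.mul_sum, Finset.mul_sum, Finset.mul_sum,
            ← Finset.sum_add_distrib, ← Finset.sum_sub_distrib]
      _ = ∑ i, (a ^ 2 * L i i + b ^ 2 * L j j - 2 * a * b * L i j) * v i :=
          Finset.sum_congr rfl fun i _ => by rw [hsym i j]; ring
      _ = 0 := hv j
  have hcolsum : ∑ j, w j = 0 := by
    have hrow : ∀ i, ∑ j, L i j = 0 := by
      intro i
      have := congrFun hL1 i
      simpa [mulVec, dotProduct] using this
    calc ∑ j, w j = ∑ j, ∑ i, L j i * v i := Finset.sum_congr rfl fun j _ => hwj j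
      _ = ∑ i, ∑ j, L j i * v i := Finset.sum_comm
      _ = 0 := by
          apply Finset.sum_eq_zero; intro i _
          rw [← Finset.sum_mul,
            show (∑ j, L j i) = ∑ j, L i j from Finset.sum_congr rfl fun j _ => (hsym j i),
            hrow i, zero_mul]
  have hE1 : (n : ℝ) * (a ^ 2 * t) + b ^ 2 * s * τ = 0 := by
    have hsum : ∑ j : Fin n, (a ^ 2 * t + b ^ 2 * L j j * s - 2 * a * b * w j) = 0 :=
      Finset.sum_eq_zero fun j _ => hv' j
    have h2 : ∑ j, b ^ 2 * L j j * s = b ^ 2 * s * τ := by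
      conv_rhs => rw [← hτ, Finset.mul_sum]
      exact Finset.sum_congr rfl fun j _ => by ring
    have h3 : ∑ j, 2 * a * b * w j = 0 := by rw [← Finset.mul_sum, hcolsum, mul_zero]
    rw [Finset.sum_sub_distrib, Finset.sum_add_distrib, h2, h3, sub_zero,
      Finset.sum_const, card_univ, Fintype.card_fin, nsmul_eq_mul] at hsum
    exact hsum
  obtain ⟨q, hq'⟩ : ∃ q, (∑ j, v j * w j) = q := ⟨_, rfl⟩
  have hq : 0 ≤ q := by
    have := hL.dotProduct_mulVec_nonneg v
    rw [← hq']
    simpa [dotProduct, hw] using this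
  have hE2 : 2 * a * b * q = (a ^ 2 + b ^ 2) * t * s := by
    have hsum : ∑ j : Fin n, v j * (a ^ 2 * t + b ^ 2 * L j j * s - 2 * a * b * w j) = 0 :=
      Finset.sum_eq_zero fun j _ => by rw [hv' j, mul_zero]
    have expand : ∑ j : Fin n, v j * (a ^ 2 * t + b ^ 2 * L j j * s - 2 * a * b * w j)
        = a ^ 2 * t * s + b ^ 2 * s * t - 2 * a * b * q := by
      calc ∑ j : Fin n, v j * (a ^ 2 * t + b ^ 2 * L j j * s - 2 * a * b * w j)
          = ∑ j : Fin n, (a ^ 2 * t * v j + b ^ 2 * s * (L j j * v j)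
              - 2 * a * b * (v j * w j)) := Finset.sum_congr rfl fun j _ => by ring
        _ = a ^ 2 * t * (∑ j, v j) + b ^ 2 * s * (∑ j, L j j * v j)
              - 2 * a * b * (∑ j, v j * w j) := by
            rw [Finset.sum_sub_distrib, Finset.sum_add_distrib, ← Finset.mul_sum,
              ← Finset.mul_sum, ← Finset.mul_sum]
        _ = a ^ 2 * t * s + b ^ 2 * s * t - 2 * a * b * q := by rw [hs, ht, hq']
    rw [expand] at hsum
    linarith
  by_contra hsne
  have hn' : (1 : ℝ) ≤ n := by
    have : n ≠ 0 := by rintro rfl; exact hsne (by simpa using hs.symm)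
    exact_mod_cast Nat.one_le_iff_ne_zero.mpr this
  have hs2 : 0 < s ^ 2 := by positivity
  have hab : 0 < a ^ 2 + b ^ 2 := by positivity
  have h6 : 0 ≤ t * s := by nlinarith [mul_pos ha hb]
  have h5 : 0 < b ^ 2 * τ * s ^ 2 := by positivity
  have h7 : 0 ≤ (n : ℝ) * a ^ 2 * (t * s) :=
    mul_nonneg (mul_nonneg (by positivity) (sq_nonneg a)) h6
  have hE1' : (n : ℝ) * a ^ 2 * (t * s) + b ^ 2 * τ * s ^ 2 = 0 := by
    linear_combination s * hE1
  linarith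

private lemma gedm_mem_range {n : ℕ} (M : Matrix (Fin n) (Fin n) ℝ)
    (h : ∀ v : Fin n → ℝ, Mᵀ *ᵥ v = 0 → ∑ i, v i = 0) :
    ∃ u : Fin n → ℝ, M *ᵥ u = fun _ => (1 : ℝ) := by
  let T : EuclideanSpace ℝ (Fin n) →ₗ[ℝ] EuclideanSpace ℝ (Fin n) :=
    { toFun := fun x => (WithLp.equiv 2 _).symm (M *ᵥ (WithLp.equiv 2 _ x))
      map_add' := fun x y => by
        ext i
        simp [Matrix.mulVec_add]
      map_smul' := fun c x => by
        ext i
        simp [Matrix.mulVec_smul] }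
  let K : Submodule ℝ (EuclideanSpace ℝ (Fin n)) := LinearMap.range T
  have h1K : ((WithLp.equiv 2 _).symm (fun _ => (1 : ℝ))) ∈ K := by
    rw [← Submodule.orthogonal_orthogonal K, Submodule.mem_orthogonal]
    intro v hv
    have hMv : Mᵀ *ᵥ (WithLp.equiv 2 _ v) = 0 := by
      funext j
      have hmem : T ((WithLp.equiv 2 _).symm (Pi.single j 1)) ∈ K := ⟨_, rfl⟩
      have := (Submodule.mem_orthogonal K v).mp hv _ hmem
      simp only [PiLp.inner_apply, RCLike.inner_apply, conj_trivial, T,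
        LinearMap.coe_mk, AddHom.coe_mk] at this
      simp only [WithLp.equiv_symm_apply, PiLp.toLp_apply, WithLp.equiv_apply, mulVec_single, mul_one] at this
      simpa [mulVec, dotProduct, transpose_apply, mul_comm] using this
    have hsum := h (WithLp.equiv 2 _ v) hMv
    simp only [PiLp.inner_apply, RCLike.inner_apply, conj_trivial, WithLp.equiv_symm_apply, PiLp.toLp_apply]
    simpa [WithLp.equiv_apply] using hsum
  obtain ⟨u, hu⟩ := h1K
  refine ⟨WithLp.equiv 2 _ u, ?_⟩
  have := congrArg (WithLp.equiv 2 (Fin n → ℝ)) hu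
  funext i
  exact congrFun (by simpa [T] using this) i

/-- For a nonzero GEDM `D`, the all-ones vector lies in the column space of `D`
and in the column space of `Dᵀ`. -/
theorem stmt8 (n : ℕ) (L D : Matrix (Fin n) (Fin n) ℝ) (hL : L.PosSemidef)
    (hL1 : L *ᵥ (fun _ => (1 : ℝ)) = 0) (hL0 : L ≠ 0)
    (a b : ℝ) (ha : 0 < a) (hb : 0 < b)
    (hD : ∀ i j, D i j = a ^ 2 * L i i + b ^ 2 * L j j - 2 * a * b * L i j) :
    (∃ u : Fin n → ℝ, D *ᵥ u = fun _ => (1 : ℝ)) ∧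
    (∃ v : Fin n → ℝ, Dᵀ *ᵥ v = fun _ => (1 : ℝ)) := by
  have htr : 0 < ∑ i, L i i := gedm_trace_pos hL hL0
  have hsym : ∀ i j, L i j = L j i := fun i j => by
    conv_lhs => rw [← hL.1]
    simp [conjTranspose_apply]
  constructor
  · apply gedm_mem_range
    intro v hv
    apply gedm_key hL hL1 htr ha hb
    intro j
    have := congrFun hv j
    simp only [mulVec, dotProduct, transpose_apply, Pi.zero_apply] at this
    rw [← this]
    exact Finset.sum_congr rfl fun i _ => by rw [hD i j]
  · apply gedm_mem_range
    intro v hv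
    rw [transpose_transpose] at hv
    apply gedm_key hL hL1 htr hb ha
    intro j
    have := congrFun hv j
    simp only [mulVec, dotProduct, Pi.zero_apply] at this
    rw [← this]
    exact Finset.sum_congr rfl fun i _ => by rw [hD j i, hsym j i]; ring
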